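/- For every integer n ≥ 0 and (x,y) ∈ Δ, E_n(x,y) := (1/x²) ∫_0^∞ e^{-t(1-x+y)/x} L_n¹(t) · (t/(e^t−1)) dt = (n+1) ∑_{m=0}^∞ (1+y+(m−1)x)ⁿ/(1+y+mx)^{n+2}. -/

import Mathlib

open Real MeasureTheory Set Filter Asymptotics

lemma integrableOn_pow_exp {σ : ℝ} (hσ : 0 < σ) (k : ℕ) :
    IntegrableOn (fun t : ℝ => t ^ k * Real.exp (-σ * t)) (Set.Ioi 0) := by
  apply integrable_of_isBigO_exp_neg (half_pos hσ)
    (Continuous.continuousOn (by continuity))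
  have h1 : (fun t : ℝ => t ^ k) =o[atTop] fun t => Real.exp ((σ/2) * t) :=
    isLittleO_pow_exp_pos_mul_atTop k (half_pos hσ)
  have h2 := h1.isBigO.mul (isBigO_refl (fun t : ℝ => Real.exp (-σ * t)) atTop)
  have heq : (fun t : ℝ => Real.exp ((σ/2)*t) * Real.exp (-σ*t))
      = fun t : ℝ => Real.exp (-(σ/2)*t) := by
    funext t; rw [← Real.exp_add]; ring_nf
  rwa [heq] at h2

lemma integral_pow_exp {σ : ℝ} (hσ : 0 < σ) (k : ℕ) :
    ∫ t in Set.Ioi (0:ℝ), t ^ k * Real.exp (-σ * t) = (Nat.factorial k : ℝ) / σ ^ (k+1) := by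
  have h := integral_rpow_mul_exp_neg_mul_Ioi (a := (k:ℝ)+1) (r := σ) (by positivity) hσ
  rw [show ((k:ℝ)+1-1) = (k:ℝ) by ring] at h
  simp_rw [Real.rpow_natCast] at h
  rw [show ((k:ℝ)+1) = ((k+1 : ℕ):ℝ) by push_cast; ring] at h
  rw [Real.rpow_natCast] at h
  rw [show (((k+1:ℕ)):ℝ) = (k:ℝ)+1 by push_cast; ring, Real.Gamma_nat_eq_factorial] at h
  simp_rw [neg_mul]
  rw [h, div_pow, one_pow]
  ring

lemma expand_pt (s : ℝ) (k : ℕ) {t : ℝ} (ht : 0 < t) :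
    t ^ k * Real.exp (-s * t) / (Real.exp t - 1)
      = ∑' m : ℕ, t ^ k * Real.exp (-(s + m + 1) * t) := by
  have h0 : Real.exp (-t) < 1 := by
    rw [Real.exp_lt_one_iff]; linarith
  have h0' : (0:ℝ) ≤ Real.exp (-t) := (Real.exp_pos _).le
  have hterm : ∀ m : ℕ, t ^ k * Real.exp (-(s + m + 1) * t)
      = (t ^ k * Real.exp (-(s+1) * t)) * (Real.exp (-t)) ^ m := by
    intro m
    rw [← Real.exp_nat_mul, mul_assoc, ← Real.exp_add]
    ring_nf
  rw [tsum_congr hterm, tsum_mul_left, tsum_geometric_of_lt_one h0' h0]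
  have h1 : Real.exp t - 1 > 0 := by
    have := Real.exp_lt_exp.mpr ht
    simp only [Real.exp_zero] at this; linarith
  have h2 : 1 - Real.exp (-t) > 0 := by linarith
  have he : Real.exp (-(s+1)*t) = Real.exp (-s*t) * Real.exp (-t) := by
    rw [← Real.exp_add]; ring_nf
  rw [he]
  field_simp [Real.exp_neg]
  have hE : Real.exp (-t) * Real.exp t = 1 := by rw [← Real.exp_add]; simp
  linear_combination (-1:ℝ) * hE

lemma summable_aux {s : ℝ} (hs : 0 < s) {k : ℕ} (hk : 1 ≤ k) (C : ℝ) :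
    Summable (fun m : ℕ => C / (s + m + 1) ^ (k+1)) := by
  have base : Summable (fun m : ℕ => 1 / ((m:ℝ)+1) ^ 2) := by
    have h := Real.summable_one_div_nat_pow.mpr (le_refl 2)
    have h2 := (summable_nat_add_iff 1).mpr h
    refine h2.congr fun m => ?_
    push_cast
    ring
  have habs : Summable (fun m : ℕ => |C| * (1 / ((m:ℝ)+1) ^ 2)) := base.mul_left _
  apply Summable.of_abs
  apply Summable.of_nonneg_of_le (fun m => abs_nonneg _) (fun m => ?_) habs
  have hm0 : (0:ℝ) ≤ (m:ℝ) := Nat.cast_nonneg m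
  have hm1 : (1:ℝ) ≤ (m:ℝ) + 1 := by linarith
  have hpos : (0:ℝ) < (s + m + 1) ^ (k+1) := by positivity
  have h1 : ((m:ℝ)+1) ^ 2 ≤ ((m:ℝ)+1) ^ (k+1) := pow_le_pow_right₀ hm1 (by omega)
  have h2 : ((m:ℝ)+1) ^ (k+1) ≤ (s + m + 1) ^ (k+1) := by
    apply pow_le_pow_left₀ (by positivity)
    linarith
  rw [abs_div, abs_of_nonneg hpos.le, div_le_iff₀ hpos, mul_one_div, div_mul_eq_mul_div,
    le_div_iff₀ (by positivity : (0:ℝ) < ((m:ℝ)+1)^2)]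
  nlinarith [abs_nonneg C]

lemma integrableOn_f {s : ℝ} (hs : 0 < s) (k : ℕ) :
    IntegrableOn (fun t : ℝ => t ^ (k+1) * Real.exp (-s * t) / (Real.exp t - 1))
      (Set.Ioi 0) := by
  have hmeas : AEStronglyMeasurable
      (fun t : ℝ => t ^ (k+1) * Real.exp (-s*t) / (Real.exp t - 1))
      (volume.restrict (Set.Ioi 0)) := by
    apply ContinuousOn.aestronglyMeasurable _ measurableSet_Ioi
    apply ContinuousOn.div
    · exact Continuous.continuousOn (by continuity)
    · exact Continuous.continuousOn (by continuity)
    · intro t ht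
      have h1 : (1:ℝ) < Real.exp t := by
        rw [← Real.exp_zero]; exact Real.exp_lt_exp.mpr ht
      simp only [Set.mem_Ioi] at ht ⊢
      intro hc; linarith [hc]
  refine (integrableOn_pow_exp hs k).mono' hmeas ?_
  rw [ae_restrict_iff' measurableSet_Ioi]
  refine ae_of_all _ fun t ht => ?_
  simp only [Set.mem_Ioi] at ht
  have h1 : (0:ℝ) < Real.exp t - 1 := by
    have := Real.exp_lt_exp.mpr ht
    simp only [Real.exp_zero] at this; linarith
  have hle : t ≤ Real.exp t - 1 := by linarith [Real.add_one_le_exp t]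
  rw [Real.norm_eq_abs, abs_of_nonneg (div_nonneg (by positivity) h1.le), div_le_iff₀ h1]
  calc t^(k+1) * Real.exp (-s*t) = (t^k * Real.exp (-s*t)) * t := by ring
    _ ≤ (t^k * Real.exp (-s*t)) * (Real.exp t - 1) :=
        mul_le_mul_of_nonneg_left hle (by positivity)

lemma lemB {s : ℝ} (hs : 0 < s) (k : ℕ) :
    ∫ t in Set.Ioi (0:ℝ), t ^ (k+1) * Real.exp (-s * t) / (Real.exp t - 1)
      = ∑' m : ℕ, (Nat.factorial (k+1) : ℝ) / (s + m + 1) ^ (k + 2) := by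
  rw [setIntegral_congr_fun measurableSet_Ioi
    (fun t ht => expand_pt s (k+1) (Set.mem_Ioi.mp ht))]
  rw [← MeasureTheory.integral_tsum_of_summable_integral_norm
    (fun m => integrableOn_pow_exp (by positivity) (k+1)) ?_]
  · apply tsum_congr; intro m
    have hσ : (0:ℝ) < s + m + 1 := by positivity
    exact integral_pow_exp hσ (k+1)
  · have heq : ∀ m : ℕ, (∫ t in Set.Ioi (0:ℝ), ‖t ^ (k+1) * Real.exp (-(s+m+1) * t)‖)
        = (Nat.factorial (k+1) : ℝ) / (s + m + 1) ^ (k+2) := by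
      intro m
      rw [setIntegral_congr_fun measurableSet_Ioi (fun t ht => by
        rw [Real.norm_eq_abs, abs_of_nonneg (mul_nonneg
          (pow_nonneg (le_of_lt (Set.mem_Ioi.mp ht)) _) (Real.exp_pos _).le)])]
      · exact integral_pow_exp (by positivity) (k+1)
    exact (summable_aux hs (k := k+1) (by omega) _).congr (fun m => (heq m).symm)

lemma choose_aux (n j : ℕ) (hj : j ≤ n) :
    (n + 1 - j) * Nat.choose (n+1) j = (n+1) * Nat.choose n j := by
  have h1 : n + 1 - j = (n - j) + 1 := by omega
  have h2 : Nat.choose (n+1) j = Nat.choose (n+1) ((n-j)+1) := by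
    rw [show (n-j)+1 = n+1-j by omega, Nat.choose_symm (by omega : j ≤ n + 1)]
  have h3 : Nat.choose n j = Nat.choose n (n - j) := by
    rw [Nat.choose_symm hj]
  rw [h1, h2, h3, mul_comm ((n-j)+1) _, ← Nat.add_one_mul_choose_eq]

lemma key_id (σ : ℝ) (n : ℕ) :
    ∑ i ∈ Finset.range (n+1),
        (-1:ℝ)^i * (Nat.choose (n+1) (n-i) : ℝ) * ((i:ℝ)+1) * σ^(n-i)
      = ((n:ℝ)+1) * (σ - 1)^n := by
  rw [← Finset.sum_range_reflect]
  rw [show (σ - 1 : ℝ) = σ + (-1) by ring, add_pow, Finset.mul_sum]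
  apply Finset.sum_congr rfl
  intro j hj
  have hjn : j ≤ n := Nat.lt_succ_iff.mp (Finset.mem_range.mp hj)
  have e1 : n + 1 - 1 - j = n - j := by omega
  rw [e1, Nat.sub_sub_self hjn]
  have h2 : ((n - j : ℕ) : ℝ) = (n:ℝ) - j := Nat.cast_sub hjn
  rw [h2]
  have hc : ((n:ℝ) - j + 1) * (Nat.choose (n+1) j : ℝ)
      = ((n:ℝ)+1) * (Nat.choose n j : ℝ) := by
    have := choose_aux n j hjn
    have hcast : (((n + 1 - j) * Nat.choose (n+1) j : ℕ) : ℝ)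
        = (((n+1) * Nat.choose n j : ℕ) : ℝ) := by exact_mod_cast this
    push_cast [Nat.cast_sub (show j ≤ n + 1 by omega)] at hcast
    linarith [hcast]
  linear_combination ((-1:ℝ)^(n-j) * σ^j) * hc

/-- The generalized Laguerre polynomial of order 1:
L_n¹(t) = ∑_{i=0}^n (−1)^i C(n+1, n−i) tⁱ/i!. -/
noncomputable def laguerre1 (n : ℕ) (t : ℝ) : ℝ :=
  ∑ i ∈ Finset.range (n + 1),
    (-1) ^ i * (Nat.choose (n + 1) (n - i) : ℝ) * t ^ i / (Nat.factorial i : ℝ)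

lemma per_sigma (σ : ℝ) (hσ : 0 < σ) (n : ℕ) :
    ∑ i ∈ Finset.range (n+1),
        ((-1:ℝ)^i * (Nat.choose (n+1) (n-i) : ℝ) / (Nat.factorial i : ℝ))
          * ((Nat.factorial (i+1) : ℝ) / σ ^ (i+2))
      = ((n:ℝ)+1) * (σ - 1)^n / σ^(n+2) := by
  rw [← key_id σ n, Finset.sum_div]

  apply Finset.sum_congr rfl
  intro i hi
  have hin : i ≤ n := Nat.lt_succ_iff.mp (Finset.mem_range.mp hi)
  have hfac : (Nat.factorial (i+1) : ℝ) = ((i:ℝ)+1) * (Nat.factorial i : ℝ) := by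
    rw [Nat.factorial_succ]; push_cast; ring
  have hpow : σ ^ (n - i) * σ ^ (i+2) = σ ^ (n+2) := by
    rw [← pow_add]; congr 1; omega
  have hfi : (Nat.factorial i : ℝ) ≠ 0 := Nat.cast_ne_zero.mpr (Nat.factorial_ne_zero i)
  rw [hfac]
  field_simp
  rw [← hpow]
  ring

theorem stmt15 (n : ℕ) (x y : ℝ) (h1 : 0 < y) (h2 : y < x) (h3 : x < 1) :
    (1 / x ^ 2) *
        ∫ t in Set.Ioi (0:ℝ),
          Real.exp (-t * (1 - x + y) / x) * laguerre1 n t * (t / (Real.exp t - 1))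
      = (n + 1) * ∑' m : ℕ, (1 + y + ((m : ℝ) - 1) * x) ^ n / (1 + y + m * x) ^ (n + 2) := by
  have hx : 0 < x := lt_trans h1 h2
  set s : ℝ := (1 - x + y) / x with hs_def
  have hs : 0 < s := div_pos (by linarith) hx
  have hA : ∀ t ∈ Set.Ioi (0:ℝ),
      Real.exp (-t * (1 - x + y) / x) * laguerre1 n t * (t / (Real.exp t - 1))
        = ∑ i ∈ Finset.range (n+1),
            ((-1:ℝ)^i * (Nat.choose (n+1) (n-i) : ℝ) / (Nat.factorial i : ℝ))
              * (t ^ (i+1) * Real.exp (-s * t) / (Real.exp t - 1)) := by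
    intro t ht
    rw [laguerre1, Finset.mul_sum, Finset.sum_mul]
    apply Finset.sum_congr rfl
    intro i _
    have hexp : Real.exp (-t * (1 - x + y) / x) = Real.exp (-s * t) := by
      congr 1; rw [hs_def]; ring
    rw [hexp]
    ring
  rw [setIntegral_congr_fun measurableSet_Ioi hA]
  rw [MeasureTheory.integral_finset_sum _
    (fun i _ => ((integrableOn_f hs i).const_mul _))]
  simp_rw [MeasureTheory.integral_const_mul]
  have step : ∑ i ∈ Finset.range (n+1),
      ((-1:ℝ)^i * (Nat.choose (n+1) (n-i) : ℝ) / (Nat.factorial i : ℝ))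
        * ∫ t in Set.Ioi (0:ℝ), t ^ (i+1) * Real.exp (-s * t) / (Real.exp t - 1)
      = ∑' m : ℕ, ((n:ℝ)+1) * (s + m + 1 - 1)^n / (s + m + 1)^(n+2) := by
    calc ∑ i ∈ Finset.range (n+1),
        ((-1:ℝ)^i * (Nat.choose (n+1) (n-i) : ℝ) / (Nat.factorial i : ℝ))
          * ∫ t in Set.Ioi (0:ℝ), t ^ (i+1) * Real.exp (-s * t) / (Real.exp t - 1)
        = ∑ i ∈ Finset.range (n+1), ∑' m : ℕ,
            ((-1:ℝ)^i * (Nat.choose (n+1) (n-i) : ℝ) / (Nat.factorial i : ℝ))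
              * ((Nat.factorial (i+1) : ℝ) / (s + m + 1) ^ (i+2)) := by
          apply Finset.sum_congr rfl
          intro i _
          rw [lemB hs i]
          exact tsum_mul_left.symm
      _ = ∑' m : ℕ, ∑ i ∈ Finset.range (n+1),
            ((-1:ℝ)^i * (Nat.choose (n+1) (n-i) : ℝ) / (Nat.factorial i : ℝ))
              * ((Nat.factorial (i+1) : ℝ) / (s + m + 1) ^ (i+2)) := by
          refine (Summable.tsum_finsetSum fun i _ => ?_).symm
          have hsum := summable_aux hs (k := i+1) (by omega)
            (((-1:ℝ)^i * (Nat.choose (n+1) (n-i) : ℝ) / (Nat.factorial i : ℝ))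
              * (Nat.factorial (i+1) : ℝ))
          exact hsum.congr fun m => by rw [mul_div_assoc]
      _ = ∑' m : ℕ, ((n:ℝ)+1) * (s + m + 1 - 1)^n / (s + m + 1)^(n+2) := by
          apply tsum_congr
          intro m
          exact per_sigma _ (by positivity) n
  rw [step, ← tsum_mul_left, ← tsum_mul_left]
  apply tsum_congr
  intro m
  have hB : (0:ℝ) < 1 + y + m * x := by positivity
  have e1 : s + (m:ℝ) + 1 - 1 = (1 + y + ((m:ℝ) - 1) * x)/x := by
    rw [hs_def]; field_simp; ring
  have e2 : s + (m:ℝ) + 1 = (1 + y + (m:ℝ) * x)/x := by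
    rw [hs_def]; field_simp; ring
  rw [e1, e2, div_pow, div_pow]
  field_simp
  ring
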